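/- Let F be a closed subspace of a Hilbert space E with orthogonal projection Pr_F, and define pr_F : G²(E) → G²(F) by pr_F(x + x⁽²⁾) = Pr_F x + Pr_F x⁽²⁾ Pr_F. Then pr_F is a group homomorphism: pr_F(𝐱·𝐲) = pr_F(𝐱)·pr_F(𝐲). -/

import Mathlib

open RealInnerProductSpace

variable {E : Type*} [NormedAddCommGroup E] [InnerProductSpace ℝ E]

/-- The wedge `x ∧ y = x* ⊗ y − y* ⊗ x`: `(x ∧ y) v = ⟪x, v⟫ y − ⟪y, v⟫ x`. -/
noncomputable def wedge (x y : E) : E →L[ℝ] E :=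
  (innerSL ℝ x).smulRight y - (innerSL ℝ y).smulRight x

/-- The group product of `G²(E)` in exponential coordinates `E ⊕ so(E)`:
`(x + x⁽²⁾)·(y + y⁽²⁾) = x + y + x⁽²⁾ + y⁽²⁾ + ½ x ∧ y`. -/
noncomputable def gmul (p q : E × (E →L[ℝ] E)) : E × (E →L[ℝ] E) :=
  (p.1 + q.1, p.2 + q.2 + ((1:ℝ) / 2) • wedge p.1 q.1)

/-- For a closed subspace `F ≤ E` with orthogonal projection `Pr_F`, the map
`pr_F(x + x⁽²⁾) = Pr_F x + Pr_F x⁽²⁾ Pr_F` is a group homomorphism on `G²(E)`. -/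
theorem stmt_10 [CompleteSpace E] (K : Submodule ℝ E) (hK : IsClosed (K : Set E)) :
    haveI : CompleteSpace K := hK.completeSpace_coe
    ∀ P : E →L[ℝ] E, P = K.subtypeL.comp (K.orthogonalProjectionOnto) →
      ∀ p q : E × (E →L[ℝ] E),
        (fun r : E × (E →L[ℝ] E) => (P r.1, P.comp (r.2.comp P))) (gmul p q) =
          gmul ((fun r : E × (E →L[ℝ] E) => (P r.1, P.comp (r.2.comp P))) p)
               ((fun r : E × (E →L[ℝ] E) => (P r.1, P.comp (r.2.comp P))) q) := by
  haveI : CompleteSpace K := hK.completeSpace_coe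
  intro P hP p q
  have hsa : ∀ x v : E, ⟪x, P v⟫ = ⟪P x, v⟫ := by
    intro x v
    subst hP
    simp only [ContinuousLinearMap.comp_apply, Submodule.subtypeL_apply]
    rw [← Submodule.starProjection_apply, ← Submodule.starProjection_apply,
      Submodule.inner_starProjection_left_eq_right]
  have key : P.comp ((wedge p.1 q.1).comp P) = wedge (P p.1) (P q.1) := by
    ext v
    simp only [ContinuousLinearMap.comp_apply, wedge, ContinuousLinearMap.sub_apply,
      ContinuousLinearMap.smulRight_apply, innerSL_apply_apply, map_sub, map_smul]
    rw [hsa p.1 v, hsa q.1 v]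
  simp only [gmul, Prod.mk.injEq]
  constructor
  · simp
  · ext v
    simp only [ContinuousLinearMap.comp_apply, ContinuousLinearMap.add_apply, map_add,
      ContinuousLinearMap.smul_apply, map_smul]
    have hv := congrArg (fun f : E →L[ℝ] E => f v) key
    simp only [ContinuousLinearMap.comp_apply] at hv
    rw [hv]
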